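/- Every nonzero *-homomorphism φ : F(H) → B(H') from the finite-rank operators on a Hilbert space H which maps operators of rank at most 1 to operators of rank at most 1 is spatially implemented by an isometry: there exists an isometry W : H → H' such that φ(t) = W t W* for all t ∈ F(H). -/

import Mathlib

set_option linter.unusedSectionVars false
set_option maxHeartbeats 1000000


open ContinuousLinearMap

variable {H H' : Type*}
  [NormedAddCommGroup H] [InnerProductSpace ℂ H] [CompleteSpace H]
  [NormedAddCommGroup H'] [InnerProductSpace ℂ H'] [CompleteSpace H']

/-- `t` is a finite-rank operator. -/
def FinRank (t : H →L[ℂ] H) : Prop :=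
  FiniteDimensional ℂ (LinearMap.range (t : H →ₗ[ℂ] H))

local notation "⟪" x ", " y "⟫" => @inner ℂ _ _ x y

/-- The rank-one operator `v ↦ ⟪y, v⟫ • x`. -/
noncomputable def rk1 (x y : H) : H →L[ℂ] H := (innerSL ℂ y).smulRight x

@[simp] lemma rk1_apply (x y v : H) : rk1 x y v = ⟪y, v⟫ • x := rfl

lemma rk1_add_left (x x' y : H) : rk1 (x + x') y = rk1 x y + rk1 x' y := by
  ext v; simp [smul_add]

lemma rk1_smul_left (c : ℂ) (x y : H) : rk1 (c • x) y = c • rk1 x y := by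
  ext v; simp; rw [smul_comm]

lemma rk1_comp (x y z w : H) : (rk1 x y).comp (rk1 z w) = ⟪y, z⟫ • rk1 x w := by
  ext v; simp [inner_smul_right, ← mul_smul, mul_comm]

lemma rk1_adjoint (x y : H) : ContinuousLinearMap.adjoint (rk1 x y) = rk1 y x := by
  symm
  rw [ContinuousLinearMap.eq_adjoint_iff]
  intro u v
  simp only [rk1_apply, inner_smul_left, inner_smul_right, inner_conj_symm]
  ring

lemma rk1_range_le (x y : H) :
    LinearMap.range ((rk1 x y : H →L[ℂ] H) : H →ₗ[ℂ] H) ≤ ℂ ∙ x := by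
  rintro v ⟨u, rfl⟩
  exact Submodule.smul_mem _ _ (Submodule.mem_span_singleton_self x)

lemma FinRank_rk1 (x y : H) : FinRank (rk1 x y) := by
  unfold FinRank
  exact Submodule.finiteDimensional_of_le (rk1_range_le x y)

lemma rk1_rank_le_one (x y : H) :
    LinearMap.rank ((rk1 x y : H →L[ℂ] H) : H →ₗ[ℂ] H) ≤ 1 := by
  refine le_trans (Submodule.rank_mono (rk1_range_le x y)) ?_
  simpa using rank_span_le (R := ℂ) {x}

lemma FinRank_zero : FinRank (0 : H →L[ℂ] H) := by
  unfold FinRank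
  rw [ContinuousLinearMap.coe_zero, LinearMap.range_zero]
  exact Module.Finite.bot ℂ H

lemma FinRank_add {s t : H →L[ℂ] H} (hs : FinRank s) (ht : FinRank t) :
    FinRank (s + t) := by
  haveI : FiniteDimensional ℂ (LinearMap.range (s : H →ₗ[ℂ] H)) := hs
  haveI : FiniteDimensional ℂ (LinearMap.range (t : H →ₗ[ℂ] H)) := ht
  have hle : LinearMap.range ((s + t : H →L[ℂ] H) : H →ₗ[ℂ] H) ≤
      LinearMap.range (s : H →ₗ[ℂ] H) ⊔ LinearMap.range (t : H →ₗ[ℂ] H) := by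
    rintro v ⟨u, rfl⟩
    exact Submodule.mem_sup.2 ⟨s u, ⟨u, rfl⟩, t u, ⟨u, rfl⟩, rfl⟩
  exact Submodule.finiteDimensional_of_le hle

lemma FinRank_sum_rk1 {n : ℕ} (x y : Fin n → H) (s : Finset (Fin n)) :
    FinRank (∑ i ∈ s, rk1 (x i) (y i)) := by
  classical
  induction s using Finset.induction with
  | empty => simpa using (FinRank_zero (H := H))
  | insert _ _ hnot ih =>
    rw [Finset.sum_insert hnot]
    exact FinRank_add (FinRank_rk1 _ _) ih

lemma exists_sum_rk1 (t : H →L[ℂ] H) (ht : FinRank t) :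
    ∃ (n : ℕ) (x y : Fin n → H), t = ∑ i, rk1 (x i) (y i) := by
  haveI : FiniteDimensional ℂ (LinearMap.range (t : H →ₗ[ℂ] H)) := ht
  set V := LinearMap.range (t : H →ₗ[ℂ] H) with hV
  obtain ⟨n, b⟩ : ∃ n, Nonempty (Module.Basis (Fin n) ℂ V) :=
    ⟨Module.finrank ℂ V, ⟨Module.finBasis ℂ V⟩⟩
  obtain ⟨b⟩ := b
  have hmem : ∀ v, t v ∈ V := fun v => LinearMap.mem_range_self _ v
  let L : H →L[ℂ] V := t.codRestrict V hmem
  let c : Fin n → (H →L[ℂ] ℂ) := fun i =>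
    (LinearMap.toContinuousLinearMap (b.coord i)).comp L
  let y : Fin n → H := fun i => (InnerProductSpace.toDual ℂ H).symm (c i)
  refine ⟨n, fun i => (b i : H), y, ?_⟩
  ext v
  have h1 : ∀ i, ⟪y i, v⟫ = c i v := fun i => InnerProductSpace.toDual_symm_apply
  have h2 : (∑ i, (b.coord i (L v)) • b i : V) = L v := by
    simpa using b.sum_repr (L v)
  calc t v = ((L v : V) : H) := rfl
    _ = ((∑ i, (b.coord i (L v)) • b i : V) : H) := by rw [h2]
    _ = ∑ i, (b.coord i (L v)) • (b i : H) := by push_cast; rfl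
    _ = (∑ i, rk1 ((b i : H)) (y i)) v := by
        rw [ContinuousLinearMap.sum_apply]
        refine Finset.sum_congr rfl fun i _ => ?_
        rw [rk1_apply, h1]
        rfl

/-- A nonzero self-adjoint idempotent of rank at most one is a rank-one projection. -/
lemma proj_structure (q : H' →L[ℂ] H') (hq2 : q.comp q = q)
    (hqa : ContinuousLinearMap.adjoint q = q)
    (hqr : LinearMap.rank ((q : H' →L[ℂ] H') : H' →ₗ[ℂ] H') ≤ 1)
    (hq0 : q ≠ 0) :
    ∃ f : H', ‖f‖ = 1 ∧ q = rk1 f f := by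
  obtain ⟨u, hu⟩ : ∃ u, q u ≠ 0 := by
    by_contra h
    push_neg at h
    exact hq0 (ContinuousLinearMap.ext fun v => by simp [h v])
  set g := q u with hg
  have hqg : q g = g := by
    have := congrArg (fun A => A u) hq2
    simpa using this
  obtain ⟨v₀, hv₀⟩ := rank_le_one_iff.1 hqr
  obtain ⟨c₀, hc₀⟩ := hv₀ ⟨g, ⟨u, rfl⟩⟩
  have hrange : ∀ x, ∃ c : ℂ, q x = c • g := by
    intro x
    have hc₀0 : c₀ ≠ 0 := by
      rintro rfl
      apply hu
      have : ((0 : ℂ) • v₀ : _) = (⟨g, _⟩ : LinearMap.range (q : H' →ₗ[ℂ] H')) := hc₀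
      simpa [← hg] using congrArg Subtype.val this.symm
    obtain ⟨c, hc⟩ := hv₀ ⟨q x, ⟨x, rfl⟩⟩
    refine ⟨c / c₀, ?_⟩
    have h1 : (c₀ • (v₀ : H') : H') = g := congrArg Subtype.val hc₀
    have h2 : (c • (v₀ : H') : H') = q x := congrArg Subtype.val hc
    rw [← h2, ← h1, smul_smul]
    congr 1
    field_simp
  set f := (‖g‖ : ℂ)⁻¹ • g with hf
  have hgnorm : ‖g‖ ≠ 0 := norm_ne_zero_iff.2 hu
  have hfnorm : ‖f‖ = 1 := by
    rw [hf, norm_smul]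
    simp [norm_inv, inv_mul_cancel₀ hgnorm]
  have hqf : q f = f := by rw [hf, map_smul, hqg]
  refine ⟨f, hfnorm, ?_⟩
  ext x
  have ⟨c, hc⟩ := hrange x
  have hcf : q x = (c * ‖g‖) • f := by
    rw [hc, hf, smul_smul]
    congr 1
    have : (‖g‖ : ℂ) ≠ 0 := by exact_mod_cast hgnorm
    field_simp
  have h3 : ⟪f, q x⟫ = (c * ‖g‖ : ℂ) := by
    rw [hcf, inner_smul_right, inner_self_eq_norm_sq_to_K, hfnorm]
    norm_num
  have h4 : ⟪f, q x⟫ = ⟪f, x⟫ := by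
    rw [← ContinuousLinearMap.adjoint_inner_left, hqa, hqf]
  show q x = ⟪f, x⟫ • f
  rw [hcf, ← h4, h3]

/-- Every nonzero `*`-homomorphism `φ : F(H) → B(H')` from the finite-rank operators on a
Hilbert space `H` which maps operators of rank at most 1 to operators of rank at most 1 is
spatially implemented by an isometry `W : H → H'`: `φ(t) = W t W*` for all `t ∈ F(H)`.
Here `φ` is encoded as a map on `B(H)` which is linear, multiplicative and `*`-preserving
on the `*`-algebra of finite-rank operators. -/
theorem stmt19 (φ : (H →L[ℂ] H) → (H' →L[ℂ] H'))
    (hadd : ∀ s t : H →L[ℂ] H, FinRank s → FinRank t → φ (s + t) = φ s + φ t)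
    (hsmul : ∀ (c : ℂ) (t : H →L[ℂ] H), FinRank t → φ (c • t) = c • φ t)
    (hmul : ∀ s t : H →L[ℂ] H, FinRank s → FinRank t → φ (s.comp t) = (φ s).comp (φ t))
    (hstar : ∀ t : H →L[ℂ] H, FinRank t →
      φ (ContinuousLinearMap.adjoint t) = ContinuousLinearMap.adjoint (φ t))
    (hnonzero : ∃ t : H →L[ℂ] H, FinRank t ∧ φ t ≠ 0)
    (hrank1 : ∀ t : H →L[ℂ] H, LinearMap.rank (t : H →ₗ[ℂ] H) ≤ 1 →
      LinearMap.rank ((φ t : H' →L[ℂ] H') : H' →ₗ[ℂ] H') ≤ 1) :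
    ∃ W : H →L[ℂ] H',
      (ContinuousLinearMap.adjoint W).comp W = 1 ∧
      ∀ t : H →L[ℂ] H, FinRank t →
        φ t = (W.comp t).comp (ContinuousLinearMap.adjoint W) := by
  classical
  -- φ 0 = 0
  have hzero : φ 0 = 0 := by
    have h := hadd 0 0 FinRank_zero FinRank_zero
    rw [add_zero] at h
    exact (left_eq_add.mp h)
  -- φ of sums of rank ones
  have hsum : ∀ (n : ℕ) (x y : Fin n → H) (s : Finset (Fin n)),
      φ (∑ i ∈ s, rk1 (x i) (y i)) = ∑ i ∈ s, φ (rk1 (x i) (y i)) := by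
    intro n x y s
    induction s using Finset.induction with
    | empty => simpa using hzero
    | insert _ _ hnot ih =>
      rw [Finset.sum_insert hnot, Finset.sum_insert hnot,
        hadd _ _ (FinRank_rk1 _ _) (FinRank_sum_rk1 _ _ _), ih]
  -- H is nontrivial
  rcases subsingleton_or_nontrivial H with hs | hn
  · obtain ⟨t, ht, hφt⟩ := hnonzero
    have ht0 : t = 0 := ContinuousLinearMap.ext fun v => Subsingleton.elim _ _
    rw [ht0, hzero] at hφt
    exact absurd rfl hφt
  obtain ⟨e, he⟩ : ∃ e : H, ‖e‖ = 1 := exists_norm_eq H zero_le_one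
  have hee : ⟪e, e⟫ = 1 := by
    rw [inner_self_eq_norm_sq_to_K, he]; norm_num
  set p := rk1 e e with hp
  have hpp : p.comp p = p := by rw [hp, rk1_comp, hee, one_smul]
  have hq2 : (φ p).comp (φ p) = φ p := by
    rw [← hmul p p (FinRank_rk1 _ _) (FinRank_rk1 _ _), hpp]
  have hqa : ContinuousLinearMap.adjoint (φ p) = φ p := by
    rw [← hstar p (FinRank_rk1 _ _), hp, rk1_adjoint]
  have hqr := hrank1 p (rk1_rank_le_one e e)
  -- auxiliary composition facts
  have hmid : ∀ b : H, p.comp (rk1 e b) = rk1 e b := by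
    intro b; rw [hp, rk1_comp, hee, one_smul]
  have houter : ∀ a b : H, (rk1 a e).comp (rk1 e b) = rk1 a b := by
    intro a b; rw [rk1_comp, hee, one_smul]
  have hfactor : ∀ a b : H, φ (rk1 a b) = (φ (rk1 a e)).comp ((φ p).comp (φ (rk1 e b))) := by
    intro a b
    calc φ (rk1 a b) = φ ((rk1 a e).comp (p.comp (rk1 e b))) := by rw [hmid, houter]
      _ = (φ (rk1 a e)).comp (φ (p.comp (rk1 e b))) := by
          rw [hmul _ _ (FinRank_rk1 _ _) (by rw [hmid]; exact FinRank_rk1 _ _)]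
      _ = (φ (rk1 a e)).comp ((φ p).comp (φ (rk1 e b))) := by
          rw [hmul p _ (FinRank_rk1 _ _) (FinRank_rk1 _ _)]
  -- φ p ≠ 0
  have hq0 : φ p ≠ 0 := by
    intro h0
    obtain ⟨t, ht, hφt⟩ := hnonzero
    apply hφt
    obtain ⟨n, x, y, rfl⟩ := exists_sum_rk1 t ht
    rw [hsum]
    refine Finset.sum_eq_zero fun i _ => ?_
    rw [hfactor, h0]
    simp
  obtain ⟨f, hf1, hfq⟩ := proj_structure (φ p) hq2 hqa hqr hq0
  have hff : ⟪f, f⟫ = 1 := by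
    rw [inner_self_eq_norm_sq_to_K, hf1]; norm_num
  -- adjoint transfer
  have hadj : ∀ b : H, φ (rk1 e b) = ContinuousLinearMap.adjoint (φ (rk1 b e)) := by
    intro b
    rw [← hstar _ (FinRank_rk1 _ _), rk1_adjoint]
  -- the linear isometry
  let Wlin : H →ₗ[ℂ] H' :=
    { toFun := fun x => φ (rk1 x e) f
      map_add' := fun x x' => by
        show φ (rk1 (x + x') e) f = φ (rk1 x e) f + φ (rk1 x' e) f
        rw [rk1_add_left, hadd _ _ (FinRank_rk1 _ _) (FinRank_rk1 _ _)]
        simp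
      map_smul' := fun c x => by
        show φ (rk1 (c • x) e) f = c • φ (rk1 x e) f
        rw [rk1_smul_left, hsmul _ _ (FinRank_rk1 _ _)]
        simp }
  have hWf : Wlin e = f := by
    show φ p f = f
    rw [hfq, rk1_apply, hff, one_smul]
  have hinner : ∀ x y : H, ⟪Wlin x, Wlin y⟫ = ⟪x, y⟫ := by
    intro x y
    have h2 : (φ (rk1 e x)).comp (φ (rk1 y e)) = ⟪x, y⟫ • φ p := by
      rw [← hmul _ _ (FinRank_rk1 _ _) (FinRank_rk1 _ _), rk1_comp, ← hp,
        hsmul _ _ (FinRank_rk1 _ _)]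
    calc ⟪Wlin x, Wlin y⟫ = ⟪φ (rk1 x e) f, φ (rk1 y e) f⟫ := rfl
      _ = ⟪f, (ContinuousLinearMap.adjoint (φ (rk1 x e))) (φ (rk1 y e) f)⟫ := by
          rw [ContinuousLinearMap.adjoint_inner_right]
      _ = ⟪f, ((φ (rk1 e x)).comp (φ (rk1 y e))) f⟫ := by rw [← hadj]; rfl
      _ = ⟪f, (⟪x, y⟫ • φ p) f⟫ := by rw [h2]
      _ = ⟪x, y⟫ * ⟪f, φ p f⟫ := by
          rw [ContinuousLinearMap.smul_apply, inner_smul_right]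
      _ = ⟪x, y⟫ := by
          rw [hfq, rk1_apply, hff, one_smul, hff, mul_one]
  have hWnorm : ∀ x : H, ‖Wlin x‖ = ‖x‖ := by
    intro x
    have h := hinner x x
    rw [inner_self_eq_norm_sq_to_K, inner_self_eq_norm_sq_to_K] at h
    have h' : ‖Wlin x‖ ^ 2 = ‖x‖ ^ 2 := by exact_mod_cast h
    nlinarith [norm_nonneg (Wlin x), norm_nonneg x]
  let W : H →L[ℂ] H' := Wlin.mkContinuous 1 (fun x => by rw [hWnorm, one_mul])
  have hWapp : ∀ x : H, W x = φ (rk1 x e) f := fun x => rfl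
  have hinnerW : ∀ x y : H, ⟪W x, W y⟫ = ⟪x, y⟫ := hinner
  -- key identity on rank ones
  have hkey : ∀ a b : H, φ (rk1 a b) = rk1 (W a) (W b) := by
    intro a b
    rw [hfactor a b]
    ext v
    have hab : ⟪f, φ (rk1 e b) v⟫ = ⟪W b, v⟫ := by
      rw [hadj b, ContinuousLinearMap.adjoint_inner_right, hWapp]
    calc (φ (rk1 a e)) ((φ p) ((φ (rk1 e b)) v))
        = (φ (rk1 a e)) (⟪f, φ (rk1 e b) v⟫ • f) := by rw [hfq, rk1_apply]
      _ = ⟪f, φ (rk1 e b) v⟫ • (φ (rk1 a e)) f := by rw [map_smul]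
      _ = ⟪W b, v⟫ • W a := by rw [hab, hWapp a]
      _ = rk1 (W a) (W b) v := rfl
  refine ⟨W, ?_, ?_⟩
  · ext y
    refine ext_inner_left ℂ fun v => ?_
    rw [ContinuousLinearMap.comp_apply, ContinuousLinearMap.adjoint_inner_right]
    rw [ContinuousLinearMap.one_apply]
    exact hinnerW v y
  · intro t ht
    obtain ⟨n, x, y, rfl⟩ := exists_sum_rk1 t ht
    rw [hsum]
    ext v
    rw [ContinuousLinearMap.sum_apply]
    simp only [ContinuousLinearMap.comp_apply, ContinuousLinearMap.sum_apply, map_sum,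
      rk1_apply, map_smul, hkey]
    refine Finset.sum_congr rfl fun i _ => ?_
    rw [ContinuousLinearMap.adjoint_inner_right]
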